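/- The Chekanov DGA of m(9₄₆) has exactly 8 graded augmentations. More precisely, a unital algebra homomorphism ε: A → ℤ/2 vanishing on all generators of nonzero degree (i.e., ε(aᵢ)=ε(cⱼ)=0) satisfies ε∘∂=0 if and only if the values xᵢ=ε(bᵢ) ∈ ℤ/2 satisfy the system 1+x₁x₆+x₂=0, 1+x₆x₄x₂+x₆+x₂=0, 1+x₃+x₂x₅=0, 1+x₃x₁+x₂x₄=0, x₁x₂=0; the solution set is { (0,1,1+t,1,t,s) : s,t ∈ ℤ/2 } ∪ { (1,0,1,u,v,1) : u,v ∈ ℤ/2 } and has exactly 8 elements. -/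

import Mathlib

/-- Generators of the Chekanov DGA of m(9₄₆). -/
inductive G : Type
  | a1 | a2 | a3 | a4 | a5 | b1 | b2 | b3 | b4 | b5 | b6 | c1 | c2
  deriving DecidableEq

open G

/-- The free unital associative algebra over ℤ/2 on the 13 generators. -/
noncomputable abbrev A : Type := FreeAlgebra (ZMod 2) G

noncomputable def X (g : G) : A := FreeAlgebra.ι (ZMod 2) g

/-- The values of the Chekanov differential on the generators. -/
noncomputable def D : G → A
  | a1 => 1 + X a5 * X c2 * X b2 + X b1 * X b6 + X b2
  | a2 => 1 + X b2 * X c2 * X a4 * X b2 + X b2 * X c2 * X b3 * X a5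
          + X b6 * X b4 * X b2 + X b6 * X c1 * X a5 + X b6 + X b2
  | a3 => 1 + X a4 * X b2 * X c2 + X b3 * X a5 * X c2 + X b3 + X b2 * X b5
  | a4 => 1 + X b3 * X b1 + X b2 * X b4
  | a5 => X b1 * X b2
  | b1 => 0
  | b2 => 0
  | b3 => X b2 * X c1
  | b4 => X c1 * X b1
  | b5 => X b4 * X b2 * X c2 + X c1 * X a5 * X c2 + X c2 + X c1
  | b6 => X b2 * X c2 * X b2
  | c1 => 0
  | c2 => 0

/-- The system of polynomial equations over ℤ/2 cutting out the graded augmentations. -/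
def sys (x1 x2 x3 x4 x5 x6 : ZMod 2) : Prop :=
  1 + x1 * x6 + x2 = 0 ∧
  1 + x6 * x4 * x2 + x6 + x2 = 0 ∧
  1 + x3 + x2 * x5 = 0 ∧
  1 + x3 * x1 + x2 * x4 = 0 ∧
  x1 * x2 = 0

/-- The solution set of the system, as a set of 6-tuples. -/
def solSet : Set (ZMod 2 × ZMod 2 × ZMod 2 × ZMod 2 × ZMod 2 × ZMod 2) :=
  {p | sys p.1 p.2.1 p.2.2.1 p.2.2.2.1 p.2.2.2.2.1 p.2.2.2.2.2}

/-- The Chekanov DGA of m(9₄₆) has exactly 8 graded augmentations: a unital algebra map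
ε : A → ℤ/2 vanishing on the generators of nonzero degree satisfies ε ∘ ∂ = 0 if and only
if its values xᵢ = ε(bᵢ) satisfy the displayed system; the solution set is the displayed
set and has exactly 8 elements. -/
theorem graded_augmentations_of_m946 :
    (∀ x1 x2 x3 x4 x5 x6 : ZMod 2, ∀ d : A →ₗ[ZMod 2] A,
      (∀ u v : A, d (u * v) = d u * v + u * d v) →
      (∀ g : G, d (X g) = D g) →
      ((∀ u : A,
          (FreeAlgebra.lift (ZMod 2) (fun g => match g with
            | b1 => x1 | b2 => x2 | b3 => x3 | b4 => x4 | b5 => x5 | b6 => x6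
            | _ => (0 : ZMod 2)) : A →ₐ[ZMod 2] ZMod 2) (d u) = 0)
        ↔ sys x1 x2 x3 x4 x5 x6)) ∧
    solSet = ({p | ∃ s t : ZMod 2, p = (0, 1, 1 + t, 1, t, s)} ∪
              {p | ∃ u v : ZMod 2, p = (1, 0, 1, u, v, 1)}) ∧
    Set.ncard solSet = 8 := by

  constructor
  · intro x1 x2 x3 x4 x5 x6 d hder hdg
    constructor
    · intro h
      have h1 := h (X a1); have h2 := h (X a2); have h3 := h (X a3)
      have h4 := h (X a4); have h5 := h (X a5)
      rw [hdg] at h1 h2 h3 h4 h5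
      simp only [D, X, map_add, map_mul, map_one, FreeAlgebra.lift_ι_apply] at h1 h2 h3 h4 h5
      refine ⟨by linear_combination h1, by linear_combination h2, by linear_combination h3,
        by linear_combination h4, by linear_combination h5⟩
    · intro hs u
      obtain ⟨h1, h2, h3, h4, h5⟩ := hs
      have hd1 : d 1 = 0 := by
        have := hder 1 1
        simp only [one_mul, mul_one] at this
        exact (left_eq_add.mp this)
      induction u using FreeAlgebra.induction with
      | grade0 r =>
        rw [Algebra.algebraMap_eq_smul_one, map_smul, hd1, smul_zero, map_zero]
      | grade1 g =>
        rw [show FreeAlgebra.ι (ZMod 2) g = X g from rfl, hdg]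
        cases g with
        | a1 => simp only [D, X, map_add, map_mul, map_one, FreeAlgebra.lift_ι_apply]
                linear_combination h1
        | a2 => simp only [D, X, map_add, map_mul, map_one, FreeAlgebra.lift_ι_apply]
                linear_combination h2
        | a3 => simp only [D, X, map_add, map_mul, map_one, FreeAlgebra.lift_ι_apply]
                linear_combination h3
        | a4 => simp only [D, X, map_add, map_mul, map_one, FreeAlgebra.lift_ι_apply]
                linear_combination h4
        | a5 => simp only [D, X, map_add, map_mul, map_one, FreeAlgebra.lift_ι_apply]
                linear_combination h5
        | b1 => simp [D]
        | b2 => simp [D]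
        | b3 => simp [D, X, FreeAlgebra.lift_ι_apply]
        | b4 => simp [D, X, FreeAlgebra.lift_ι_apply]
        | b5 => simp [D, X, FreeAlgebra.lift_ι_apply]
        | b6 => simp [D, X, FreeAlgebra.lift_ι_apply]
        | c1 => simp [D]
        | c2 => simp [D]
      | mul u v hu hv =>
        rw [hder, map_add, map_mul, map_mul, hu, hv, zero_mul, mul_zero, add_zero]
      | add u v hu hv =>
        rw [map_add, map_add, hu, hv, add_zero]
  constructor
  · ext ⟨a, b, c, e, f, g⟩
    simp only [solSet, sys, Set.mem_setOf_eq, Set.mem_union, Prod.mk.injEq]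
    revert a b c e f g
    set_option synthInstance.maxSize 1000 in
    set_option synthInstance.maxHeartbeats 1000000 in
    set_option maxHeartbeats 1000000 in
    decide
  · have h : solSet = (↑({(0,1,1,1,0,0),(0,1,1,1,0,1),(0,1,0,1,1,0),(0,1,0,1,1,1),
        (1,0,1,0,0,1),(1,0,1,0,1,1),(1,0,1,1,0,1),(1,0,1,1,1,1)} :
        Finset (ZMod 2 × ZMod 2 × ZMod 2 × ZMod 2 × ZMod 2 × ZMod 2)) : Set _) := by
      ext ⟨a, b, c, e, f, g⟩
      simp only [solSet, sys, Set.mem_setOf_eq, Finset.coe_insert, Set.mem_insert_iff,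
        Finset.coe_singleton, Set.mem_singleton_iff, Prod.mk.injEq]
      revert a b c e f g
      set_option synthInstance.maxSize 1000 in
      set_option synthInstance.maxHeartbeats 1000000 in
      set_option maxHeartbeats 1000000 in
      decide
    rw [h, Set.ncard_coe_finset]
    decide
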